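/- arXiv:1709.05511 — 2 statements merged into one kernel-verified Lean document; each statement's English description precedes it below -/
import Mathlib

section
/- Let Γ₁, …, Γ_s be nontrivial groups and let Γ = Γ₁ × ⋯ × Γ_s. Suppose that every automorphism of Γ permutes the canonical factor subgroups (for every automorphism φ there is a permutation σ of {1, …, s} with φ(Gᵢ) = G_{σ(i)} for all i). Then the kernel of the induced homomorphism Out(Γ) → Sym(s) is isomorphic, as a group, to the direct product Out(Γ₁) × ⋯ × Out(Γ_s). -/
/-- The `i`-th canonical factor subgroup of a direct product `Γ = Γ₁ × ⋯ × Γ_s`: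
tuples whose coordinates are trivial except possibly at position `i`. -/
def factorSubgroup {s : ℕ} (Γ : Fin s → Type*) [∀ i, Group (Γ i)] (i : Fin s) :
    Subgroup (∀ j, Γ j) where
  carrier := {x | ∀ j, j ≠ i → x j = 1}
  one_mem' := fun _ _ => rfl
  mul_mem' := by
    intro a b ha hb j hj
    simp [Pi.mul_apply, ha j hj, hb j hj]
  inv_mem' := by
    intro a ha j hj
    simp [Pi.inv_apply, ha j hj]

/-- The subgroup of inner automorphisms `Inn(G) ≤ Aut(G)`, i.e. the range of the
conjugation homomorphism `G →* Aut(G)`, is a normal subgroup. -/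
instance innRangeNormal (G : Type*) [Group G] :
    ((MulAut.conj : G →* MulAut G).range).Normal := by
  constructor
  rintro _ ⟨g, rfl⟩ φ
  refine ⟨φ g, ?_⟩
  ext x
  simp [MulAut.conj, mul_assoc]

/-- The outer automorphism group `Out(G) = Aut(G)/Inn(G)`. -/
abbrev OutGroup (G : Type*) [Group G] :=
  MulAut G ⧸ (MulAut.conj : G →* MulAut G).range

namespace KerProofAux

variable {s : ℕ} {Γ : Fin s → Type*} [∀ i, Group (Γ i)]

lemma mulSingle_mem (i : Fin s) (g : Γ i) : Pi.mulSingle i g ∈ factorSubgroup Γ i :=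
  fun _ hj => Pi.mulSingle_eq_of_ne hj g

lemma eq_mulSingle_of_mem {i : Fin s} {x : ∀ j, Γ j} (hx : x ∈ factorSubgroup Γ i) :
    x = Pi.mulSingle i (x i) := by
  funext j
  by_cases hj : j = i
  · subst hj; simp
  · rw [hx j hj, Pi.mulSingle_eq_of_ne hj]

/-- Coordinatewise action of a tuple of automorphisms. -/
def Theta : (∀ i, MulAut (Γ i)) →* MulAut (∀ i, Γ i) where
  toFun e := MulEquiv.piCongrRight e
  map_one' := by ext x; rfl
  map_mul' e f := by ext x; rfl

lemma theta_apply (e : ∀ i, MulAut (Γ i)) (x : ∀ i, Γ i) (j : Fin s) :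
    Theta e x j = e j (x j) := rfl

lemma apply_mulSingle (φ : MulAut (∀ i, Γ i))
    (hφ : ∀ i, (factorSubgroup Γ i).map φ.toMonoidHom = factorSubgroup Γ i)
    (i : Fin s) (g : Γ i) :
    φ (Pi.mulSingle i g) = Pi.mulSingle i (φ (Pi.mulSingle i g) i) := by
  apply eq_mulSingle_of_mem
  rw [← hφ i]
  exact ⟨Pi.mulSingle i g, mulSingle_mem i g, rfl⟩

lemma inv_pres (φ : MulAut (∀ i, Γ i))
    (hφ : ∀ i, (factorSubgroup Γ i).map φ.toMonoidHom = factorSubgroup Γ i) (i : Fin s) :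
    (factorSubgroup Γ i).map (φ⁻¹ : MulAut (∀ i, Γ i)).toMonoidHom = factorSubgroup Γ i := by
  conv_lhs => rw [← hφ i]
  rw [Subgroup.map_map]
  convert Subgroup.map_id _ using 2
  ext x
  simp

/-- The component automorphism at position `i`. -/
noncomputable def compAut (φ : MulAut (∀ i, Γ i))
    (hφ : ∀ i, (factorSubgroup Γ i).map φ.toMonoidHom = factorSubgroup Γ i)
    (i : Fin s) : MulAut (Γ i) where
  toFun g := φ (Pi.mulSingle i g) i
  invFun g := φ⁻¹ (Pi.mulSingle i g) i
  left_inv g := by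
    show φ⁻¹ (Pi.mulSingle i (φ (Pi.mulSingle i g) i)) i = g
    rw [← apply_mulSingle φ hφ i g]
    simp
  right_inv g := by
    show φ (Pi.mulSingle i (φ⁻¹ (Pi.mulSingle i g) i)) i = g
    rw [← apply_mulSingle (φ⁻¹) (inv_pres φ hφ) i g]
    simp
  map_mul' a b := by
    show φ (Pi.mulSingle i (a * b)) i = φ (Pi.mulSingle i a) i * φ (Pi.mulSingle i b) i
    rw [Pi.mulSingle_mul, map_mul, Pi.mul_apply]

lemma theta_compAut (φ : MulAut (∀ i, Γ i))
    (hφ : ∀ i, (factorSubgroup Γ i).map φ.toMonoidHom = factorSubgroup Γ i) :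
    Theta (compAut φ hφ) = φ := by
  have key : ∀ x : ∀ i, Γ i, φ x = fun i => compAut φ hφ i (x i) := by
    intro x
    refine ((congrArg φ (Finset.noncommProd_mulSingle x).symm).trans
      (Finset.map_noncommProd _ _ _ φ)).trans ?_
    refine (Finset.noncommProd_congr rfl
      (g := fun i => Pi.mulSingle i (compAut φ hφ i (x i)))
      (fun i _ => apply_mulSingle φ hφ i (x i)) _).trans ?_
    exact Finset.noncommProd_mulSingle (fun i => compAut φ hφ i (x i))
  ext x j
  rw [theta_apply, key x]

lemma theta_pres (e : ∀ i, MulAut (Γ i)) (i : Fin s) :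
    (factorSubgroup Γ i).map (Theta e).toMonoidHom = factorSubgroup Γ i := by
  ext x
  constructor
  · rintro ⟨y, hy, rfl⟩ j hj
    show e j (y j) = 1
    rw [hy j hj, map_one]
  · intro hx
    refine ⟨(Theta e)⁻¹ x, fun j hj => ?_, by simp⟩
    rw [← map_inv Theta e, theta_apply, hx j hj]
    simp

lemma theta_conj (g : ∀ i, Γ i) :
    Theta (fun i => MulAut.conj (g i)) = MulAut.conj g := by
  ext x j
  simp [theta_apply, MulAut.conj]

lemma conj_comp (e : ∀ i, MulAut (Γ i)) (g : ∀ i, Γ i)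
    (hg : Theta e = MulAut.conj g) (i : Fin s) :
    e i = MulAut.conj (g i) := by
  ext x
  have h := congrArg (fun ψ : MulAut (∀ i, Γ i) => ψ (Pi.mulSingle i x) i) hg
  simpa [theta_apply, MulAut.conj] using h

lemma factor_inj [∀ i, Nontrivial (Γ i)] {i j : Fin s}
    (hij : factorSubgroup Γ i = factorSubgroup Γ j) : i = j := by
  by_contra hne
  obtain ⟨g, hg⟩ := exists_ne (1 : Γ i)
  have hm : Pi.mulSingle i g ∈ factorSubgroup Γ j := hij ▸ mulSingle_mem i g
  have := hm i hne
  rw [Pi.mulSingle_eq_same] at this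
  exact hg this

/-- The coordinatewise projection to the outer automorphism groups. -/
def Pmap : (∀ i, MulAut (Γ i)) →* ∀ i, OutGroup (Γ i) where
  toFun e := fun i => QuotientGroup.mk (e i)
  map_one' := rfl
  map_mul' _ _ := rfl

end KerProofAux

/-- Let `Γ₁, …, Γ_s` be nontrivial groups, `Γ` their direct product, and
suppose every automorphism of `Γ` permutes the canonical factor subgroups.  Then the kernel
of the induced homomorphism `Out(Γ) →* Sym(s)` (i.e. of any homomorphism sending the class
of `φ` to the permutation `σ_φ` with `φ(Gᵢ) = G_{σ_φ(i)}`) is isomorphic to the direct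
product `Out(Γ₁) × ⋯ × Out(Γ_s)`. -/
theorem ker_of_induced_out_to_perm_iso_pi_out
    {s : ℕ} (Γ : Fin s → Type*) [∀ i, Group (Γ i)] [∀ i, Nontrivial (Γ i)]
    (h : ∀ φ : MulAut (∀ i, Γ i), ∃ σ : Equiv.Perm (Fin s),
      ∀ i, (factorSubgroup Γ i).map φ.toMonoidHom = factorSubgroup Γ (σ i))
    (Ψ : OutGroup (∀ i, Γ i) →* Equiv.Perm (Fin s))
    (hΨ : ∀ (φ : MulAut (∀ i, Γ i)) (i : Fin s),
      (factorSubgroup Γ i).map φ.toMonoidHom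
        = factorSubgroup Γ (Ψ (QuotientGroup.mk φ) i)) :
    Nonempty (Ψ.ker ≃* ∀ i, OutGroup (Γ i)) := by
  classical
  open KerProofAux in
  have hker_mem : ∀ e : ∀ i, MulAut (Γ i),
      (QuotientGroup.mk (Theta e) : OutGroup (∀ i, Γ i)) ∈ Ψ.ker := by
    intro e
    rw [MonoidHom.mem_ker]
    apply Equiv.ext
    intro i
    have hi := hΨ (Theta e) i
    rw [theta_pres] at hi
    simpa using (factor_inj hi).symm
  let F : (∀ i, MulAut (Γ i)) →* Ψ.ker :=
    MonoidHom.codRestrict ((QuotientGroup.mk' _).comp KerProofAux.Theta) Ψ.ker hker_mem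
  have hFval : ∀ e, (F e : OutGroup (∀ i, Γ i)) = QuotientGroup.mk (Theta e) := fun _ => rfl
  have hFsurj : Function.Surjective F := by
    rintro ⟨q, hq⟩
    obtain ⟨φ, rfl⟩ := QuotientGroup.mk_surjective q
    rw [MonoidHom.mem_ker] at hq
    have hpres : ∀ i, (factorSubgroup Γ i).map φ.toMonoidHom = factorSubgroup Γ i := by
      intro i
      rw [hΨ φ i, hq]
      rfl
    refine ⟨compAut φ hpres, Subtype.ext ?_⟩
    rw [hFval, theta_compAut φ hpres]
  have hPsurj : Function.Surjective (Pmap (Γ := Γ)) := by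
    intro q
    choose φ hφ using fun i => QuotientGroup.mk_surjective (q i)
    exact ⟨φ, funext hφ⟩
  have hkereq : F.ker = (Pmap (Γ := Γ)).ker := by
    ext e
    simp only [MonoidHom.mem_ker]
    constructor
    · intro he
      have hval : (QuotientGroup.mk (Theta e) : OutGroup (∀ i, Γ i)) = 1 := by
        rw [← hFval, he]; rfl
      rw [QuotientGroup.eq_one_iff] at hval
      obtain ⟨g, hg⟩ := hval
      funext i
      show (QuotientGroup.mk (e i) : OutGroup (Γ i)) = 1
      rw [QuotientGroup.eq_one_iff]
      exact ⟨g i, (conj_comp e g hg.symm i).symm⟩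
    · intro he
      have hcomp : ∀ i, ∃ gi, MulAut.conj gi = e i := by
        intro i
        have hi : (QuotientGroup.mk (e i) : OutGroup (Γ i)) = 1 := congrFun he i
        rwa [QuotientGroup.eq_one_iff] at hi
      choose g hg using hcomp
      have hTe : Theta e = MulAut.conj g := by
        have : e = fun i => MulAut.conj (g i) := funext fun i => (hg i).symm
        rw [this, theta_conj]
      apply Subtype.ext
      rw [hFval]
      show _ = (1 : OutGroup (∀ i, Γ i))
      rw [hTe, QuotientGroup.eq_one_iff]
      exact ⟨g, rfl⟩
  exact ⟨((QuotientGroup.quotientKerEquivOfSurjective F hFsurj).symm.trans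
    (QuotientGroup.quotientMulEquivOfEq hkereq)).trans
    (QuotientGroup.quotientKerEquivOfSurjective _ hPsurj)⟩
end

section
/- Let Γ₁, …, Γ_s be nontrivial groups and let Γ = Γ₁ × ⋯ × Γ_s. Suppose that every automorphism of Γ permutes the canonical factor subgroups (for every automorphism φ there is a permutation σ of {1, …, s} with φ(Gᵢ) = G_{σ(i)} for all i). If the outer automorphism group Out(Γᵢ) is finite for every i = 1, …, s, then Out(Γ) is finite. -/
section Aux

variable {s : ℕ} {Γ : Fin s → Type*} [∀ i, Group (Γ i)]

lemma mem_factorSubgroup_iff [DecidableEq (Fin s)] {i : Fin s} {y : ∀ j, Γ j} :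
    y ∈ factorSubgroup Γ i ↔ y = Pi.mulSingle i (y i) := by
  constructor
  · intro hy
    funext j
    by_cases hj : j = i
    · subst hj; simp
    · rw [hy j hj, Pi.mulSingle_eq_of_ne hj]
  · intro hy j hj
    rw [hy]
    exact Pi.mulSingle_eq_of_ne hj _

lemma mulSingle_mem_factorSubgroup [DecidableEq (Fin s)] (i : Fin s) (x : Γ i) :
    Pi.mulSingle i x ∈ factorSubgroup Γ i :=
  fun _ hj => Pi.mulSingle_eq_of_ne hj x

/-- The relation on isomorphisms `A ≃* B` : differ by an inner automorphism of `B`. -/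
instance isoRel (A B : Type*) [Group A] [Group B] : Setoid (A ≃* B) where
  r e e' := ∃ g : B, ∀ x, e' x = g * e x * g⁻¹
  iseqv := by
    refine ⟨fun e => ⟨1, by simp⟩, ?_, ?_⟩
    · rintro e e' ⟨g, hg⟩
      exact ⟨g⁻¹, fun x => by rw [hg x]; group⟩
    · rintro e e' e'' ⟨g, hg⟩ ⟨g', hg'⟩
      exact ⟨g' * g, fun x => by rw [hg' x, hg x]; group⟩

lemma finite_isoQuot (A B : Type*) [Group A] [Group B] [Finite (OutGroup B)] :
    Finite (Quotient (isoRel A B)) := by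
  by_cases hne : Nonempty (A ≃* B)
  · obtain ⟨e₀⟩ := hne
    refine Finite.of_surjective
      (fun (o : OutGroup B) => (⟦e₀.trans (Quotient.out o)⟧ : Quotient (isoRel A B))) ?_
    intro q
    induction q using Quotient.inductionOn with
    | h e =>
      refine ⟨QuotientGroup.mk (e₀.symm.trans e : MulAut B), ?_⟩
      set α : MulAut B := Quotient.out (QuotientGroup.mk (e₀.symm.trans e : MulAut B)) with hα
      have h1 : (QuotientGroup.mk α : OutGroup B)
          = QuotientGroup.mk (e₀.symm.trans e : MulAut B) := by
        rw [hα]; exact Quotient.out_eq' _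
      obtain ⟨g, hg⟩ := QuotientGroup.eq.mp h1
      -- hg : MulAut.conj g = α⁻¹ * (e₀.symm.trans e)
      apply Quotient.sound
      refine ⟨α g, fun y => ?_⟩
      have h3 : g * e₀ y * g⁻¹ = α⁻¹ (e y) := by
        simpa using DFunLike.congr_fun hg (e₀ y)
      calc e y = α (α⁻¹ (e y)) := by simp
        _ = α (g * e₀ y * g⁻¹) := by rw [h3]
        _ = α g * (e₀.trans α) y * (α g)⁻¹ := by simp [map_mul]
  · have : IsEmpty (A ≃* B) := not_nonempty_iff.mp hne
    exact Finite.of_surjective (Quotient.mk (isoRel A B)) Quotient.mk_surjective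

end Aux

section Aux2

variable {s : ℕ} {Γ : Fin s → Type*} [∀ i, Group (Γ i)] [DecidableEq (Fin s)]

lemma exists_factor_iso (φ : MulAut (∀ i, Γ i)) (i j : Fin s)
    (hmap : (factorSubgroup Γ i).map φ.toMonoidHom = factorSubgroup Γ j) :
    ∃ e : Γ i ≃* Γ j, ∀ x, φ (Pi.mulSingle i x) = Pi.mulSingle j (e x) := by
  have hfwd : ∀ x : Γ i, φ (Pi.mulSingle i x) ∈ factorSubgroup Γ j := by
    intro x
    rw [← hmap]
    exact ⟨Pi.mulSingle i x, mulSingle_mem_factorSubgroup i x, rfl⟩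
  have hbwd : ∀ y : Γ j, φ⁻¹ (Pi.mulSingle j y) ∈ factorSubgroup Γ i := by
    intro y
    have hy : Pi.mulSingle j y ∈ (factorSubgroup Γ i).map φ.toMonoidHom := by
      rw [hmap]; exact mulSingle_mem_factorSubgroup j y
    obtain ⟨z, hz, hzeq⟩ := hy
    have : φ⁻¹ (Pi.mulSingle j y) = z := by
      rw [← hzeq]
      simp
    rwa [this]
  refine ⟨{ toFun := fun x => φ (Pi.mulSingle i x) j,
            invFun := fun y => φ⁻¹ (Pi.mulSingle j y) i,
            left_inv := ?_, right_inv := ?_, map_mul' := ?_ }, ?_⟩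
  · intro x
    have h1 := mem_factorSubgroup_iff.mp (hfwd x)
    show φ⁻¹ (Pi.mulSingle j (φ (Pi.mulSingle i x) j)) i = x
    rw [← h1]
    simp
  · intro y
    have h2 := mem_factorSubgroup_iff.mp (hbwd y)
    show φ (Pi.mulSingle i (φ⁻¹ (Pi.mulSingle j y) i)) j = y
    rw [← h2]
    show φ (φ⁻¹ (Pi.mulSingle j y)) j = y
    simp
  · intro x y
    show φ (Pi.mulSingle i (x * y)) j = _
    rw [Pi.mulSingle_mul, map_mul, Pi.mul_apply]
  · intro x
    exact mem_factorSubgroup_iff.mp (hfwd x)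

end Aux2

/-- Let `Γ₁, …, Γ_s` be nontrivial groups, `Γ` their direct product, and
suppose every automorphism of `Γ` permutes the canonical factor subgroups.  If each
`Out(Γᵢ)` is finite, then `Out(Γ)` is finite. -/
theorem out_finite_of_permutes_factors
    {s : ℕ} (Γ : Fin s → Type*) [∀ i, Group (Γ i)] [∀ i, Nontrivial (Γ i)]
    (h : ∀ φ : MulAut (∀ i, Γ i), ∃ σ : Equiv.Perm (Fin s),
      ∀ i, (factorSubgroup Γ i).map φ.toMonoidHom = factorSubgroup Γ (σ i))
    (hfin : ∀ i, Finite (OutGroup (Γ i))) :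
    Finite (OutGroup (∀ i, Γ i)) := by
  classical
  haveI hQ : ∀ i j : Fin s, Finite (Quotient (isoRel (Γ i) (Γ j))) := fun i j =>
    haveI := hfin j
    finite_isoQuot (Γ i) (Γ j)
  let F : MulAut (∀ i, Γ i) → (∀ i : Fin s, Σ j : Fin s, Quotient (isoRel (Γ i) (Γ j))) :=
    fun φ i => ⟨(h φ).choose i,
      ⟦(exists_factor_iso φ i ((h φ).choose i) ((h φ).choose_spec i)).choose⟧⟩
  suffices hinj : ∀ φ ψ : MulAut (∀ i, Γ i), F φ = F ψ →
      (QuotientGroup.mk φ : OutGroup (∀ i, Γ i)) = QuotientGroup.mk ψ by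
    refine Finite.of_injective (fun o : OutGroup (∀ i, Γ i) => F (Quotient.out o)) ?_
    intro o o' hF
    have h2 := hinj _ _ hF
    rwa [QuotientGroup.out_eq' o, QuotientGroup.out_eq' o'] at h2
  intro φ ψ hFeq
  set σ : Equiv.Perm (Fin s) := (h ψ).choose with hσ
  have hψmem : ∀ i (x : Γ i), ψ (Pi.mulSingle i x) ∈ factorSubgroup Γ (σ i) := by
    intro i x
    rw [← (h ψ).choose_spec i]
    exact ⟨_, mulSingle_mem_factorSubgroup i x, rfl⟩
  have key : ∀ i, ∃ g : Γ (σ i), ∀ x : Γ i,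
      φ (Pi.mulSingle i x) = Pi.mulSingle (σ i)
        (g * ψ (Pi.mulSingle i x) (σ i) * g⁻¹) := by
    intro i
    have hpred : ∃ e : Γ i ≃* Γ (F φ i).1, (F φ i).2 = ⟦e⟧ ∧
        ∀ x, φ (Pi.mulSingle i x) = Pi.mulSingle (F φ i).1 (e x) :=
      ⟨_, rfl, (exists_factor_iso φ i ((h φ).choose i) ((h φ).choose_spec i)).choose_spec⟩
    rw [hFeq] at hpred
    obtain ⟨e, he, hx⟩ := hpred
    have he' : (⟦(exists_factor_iso ψ i ((h ψ).choose i) ((h ψ).choose_spec i)).choose⟧ :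
        Quotient (isoRel (Γ i) (Γ (σ i)))) = ⟦e⟧ := he
    obtain ⟨g, hg⟩ := Quotient.exact he'
    refine ⟨g, fun x => ?_⟩
    have hψe := (exists_factor_iso ψ i ((h ψ).choose i) ((h ψ).choose_spec i)).choose_spec x
    have hcoord : ψ (Pi.mulSingle i x) (σ i)
        = (exists_factor_iso ψ i ((h ψ).choose i) ((h ψ).choose_spec i)).choose x := by
      rw [hψe]; exact Pi.mulSingle_eq_same _ _
    calc φ (Pi.mulSingle i x) = Pi.mulSingle (σ i) (e x) := hx x
      _ = Pi.mulSingle (σ i)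
            (g * (exists_factor_iso ψ i ((h ψ).choose i) ((h ψ).choose_spec i)).choose x * g⁻¹) := by
            rw [hg x]
      _ = _ := by rw [hcoord]
  choose g hgspec using key
  set gg : ∀ j, Γ j := fun j => Pi.mulSingle (σ (σ.symm j)) (g (σ.symm j)) j with hgg
  have hφψ : φ = MulAut.conj gg * ψ := by
    have hhom : φ.toMonoidHom = (MulAut.conj gg * ψ).toMonoidHom := by
      apply MonoidHom.pi_ext
      intro i x
      show φ (Pi.mulSingle i x) = MulAut.conj gg (ψ (Pi.mulSingle i x))
      rw [hgspec i x]
      have hpsi := mem_factorSubgroup_iff.mp (hψmem i x)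
      set a := ψ (Pi.mulSingle i x) (σ i) with ha
      rw [hpsi]
      funext j
      by_cases hj : j = σ i
      · subst hj
        simp only [MulAut.conj_apply, Pi.mul_apply, Pi.inv_apply, Pi.mulSingle_eq_same, hgg]
        rw [Equiv.symm_apply_apply]
        simp [Pi.mulSingle_eq_same]
      · simp [MulAut.conj_apply, Pi.mulSingle_eq_of_ne hj, Pi.mul_apply]
    apply MulEquiv.ext
    intro x
    exact DFunLike.congr_fun hhom x
  rw [hφψ, QuotientGroup.mk_mul]
  have h1 : (QuotientGroup.mk (MulAut.conj gg) : OutGroup (∀ i, Γ i)) = 1 :=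
    (QuotientGroup.eq_one_iff _).mpr ⟨gg, rfl⟩
  rw [h1, one_mul]
end
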